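/- For every integer n ≥ 2 and each z ∈ {x, y}: every proper 3-coloring σ of the graph H_n with σ(v) = 3 and σ(z) = 1 equals η. -/
import Mathlib


/-- Vertices of the gadget graph `H_n`: `x`, `y`, `v`, and the vertices `u_{1,i}`
(`a i`) and `u_{2,i}` (`b i`) for `1 ≤ i ≤ n`. -/
inductive HVert (n : ℕ) : Type
  | x : HVert n
  | y : HVert n
  | v : HVert n
  | a : Fin n → HVert n
  | b : Fin n → HVert n

/-- The edges of `H_n`: for each `1 ≤ i ≤ n`, all edges of the triangles
`{x, u_{1,i}, u_{2,i}}` and `{y, u_{1,i}, u_{2,i}}`, together with the edge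
`v u_{1,i}`. -/
def HRel (n : ℕ) : HVert n → HVert n → Prop
  | .x, .a _ => True
  | .x, .b _ => True
  | .y, .a _ => True
  | .y, .b _ => True
  | .v, .a _ => True
  | .a i, .b j => i = j
  | _, _ => False

/-- The gadget graph `H_n`. -/
def Hgraph (n : ℕ) : SimpleGraph (HVert n) := SimpleGraph.fromRel (HRel n)

/-- The coloring `η` of `H_n`; colors `1, 2, 3` are modelled as `0, 1, 2 : Fin 3`:
`η(v) = 3`, `η(x) = η(y) = 1`, `η(u_{1,i}) = 2`, `η(u_{2,i}) = 3`. -/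
def ηH (n : ℕ) : HVert n → Fin 3
  | .x => 0
  | .y => 0
  | .v => 2
  | .a _ => 1
  | .b _ => 2

/-- For every `n ≥ 2` and each `w ∈ {x, y}`: every proper 3-coloring `σ` of `H_n` with
`σ(v) = 3` and `σ(w) = 1` (colors `1, 2, 3` are modelled as `0, 1, 2 : Fin 3`) is
equal to `η`. -/
theorem stmt15 (n : ℕ) (hn : 2 ≤ n) (w : HVert n) (hw : w = .x ∨ w = .y)
    (σ : HVert n → Fin 3) (hproper : ∀ p q, (Hgraph n).Adj p q → σ p ≠ σ q)
    (hv : σ .v = 2) (hz : σ w = 0) :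
    σ = ηH n := by
  have hAdj : ∀ p q : HVert n, HRel n p q → p ≠ q → (Hgraph n).Adj p q :=
    fun p q h hne => (SimpleGraph.fromRel_adj _ _ _).mpr ⟨hne, Or.inl h⟩
  have f1 : ∀ c : Fin 3, c ≠ 0 → c ≠ 2 → c = 1 := by decide
  have f2 : ∀ c : Fin 3, c ≠ 0 → c ≠ 1 → c = 2 := by decide
  have f0 : ∀ c : Fin 3, c ≠ 1 → c ≠ 2 → c = 0 := by decide
  have hwa : ∀ i, (Hgraph n).Adj w (.a i) := by
    intro i; rcases hw with h | h <;> subst h <;>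
      exact hAdj _ _ trivial (by intro h; cases h)
  have hwb : ∀ i, (Hgraph n).Adj w (.b i) := by
    intro i; rcases hw with h | h <;> subst h <;>
      exact hAdj _ _ trivial (by intro h; cases h)
  have hva : ∀ i, (Hgraph n).Adj .v (.a i) :=
    fun i => hAdj _ _ trivial (by intro h; cases h)
  have hab : ∀ i, (Hgraph n).Adj (.a i) (.b i) :=
    fun i => hAdj _ _ rfl (by intro h; cases h)
  have hxa : ∀ i, (Hgraph n).Adj .x (.a i) :=
    fun i => hAdj _ _ trivial (by intro h; cases h)
  have hxb : ∀ i, (Hgraph n).Adj .x (.b i) :=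
    fun i => hAdj _ _ trivial (by intro h; cases h)
  have hya : ∀ i, (Hgraph n).Adj .y (.a i) :=
    fun i => hAdj _ _ trivial (by intro h; cases h)
  have hyb : ∀ i, (Hgraph n).Adj .y (.b i) :=
    fun i => hAdj _ _ trivial (by intro h; cases h)
  have ha : ∀ i, σ (.a i) = 1 := by
    intro i
    refine f1 _ (fun h => hproper _ _ (hwa i) (hz.trans h.symm)) ?_
    exact fun h => hproper _ _ (hva i) (hv.trans h.symm)
  have hb : ∀ i, σ (.b i) = 2 := by
    intro i
    refine f2 _ (fun h => hproper _ _ (hwb i) (hz.trans h.symm)) ?_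
    exact fun h => hproper _ _ (hab i) ((ha i).trans h.symm)
  have i0 : Fin n := ⟨0, by omega⟩
  have hx : σ .x = 0 := by
    refine f0 _ (fun h => hproper _ _ (hxa i0) (h.trans (ha i0).symm)) ?_
    exact fun h => hproper _ _ (hxb i0) (h.trans (hb i0).symm)
  have hy : σ .y = 0 := by
    refine f0 _ (fun h => hproper _ _ (hya i0) (h.trans (ha i0).symm)) ?_
    exact fun h => hproper _ _ (hyb i0) (h.trans (hb i0).symm)
  funext p
  cases p with
  | x => exact hx
  | y => exact hy
  | v => exact hv
  | a i => exact ha i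
  | b i => exact hb i
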